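/- If there exists an admissible directed path in the quantum Bruhat graph Γ_n from u to v of weight d ∈ ℤ_{≥0}^{n−1}, then there exist β = (β_1,…,β_{n−1}) ∈ ℤ_{≥0}^{n−1} with β_k ≤ n−k for all k and a y^β-admissible directed path in Γ_n from u to v of the same weight d. -/

import Mathlib

open Equiv

/-- Number of inversions of a permutation of `Fin n` (its Coxeter length). -/
def len (n : ℕ) (w : Equiv.Perm (Fin n)) : ℕ :=
  (Finset.univ.filter (fun p : Fin n × Fin n => p.1 < p.2 ∧ w p.2 < w p.1)).card

/-- The endpoint of the edge labeled `p = (i, j)` starting at `u`: right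
multiplication by the transposition `s_{ij}`. -/
def step (n : ℕ) (u : Equiv.Perm (Fin n)) (p : Fin n × Fin n) : Equiv.Perm (Fin n) :=
  u * Equiv.swap p.1 p.2

/-- `u → u·s_{ij}` is an edge of the quantum Bruhat graph `Γ_n`:
either `ℓ(u s_{ij}) = ℓ(u) + 1`, or `ℓ(u s_{ij}) = ℓ(u) + 1 - 2(j - i)`. -/
def isQBEdge (n : ℕ) (u : Equiv.Perm (Fin n)) (p : Fin n × Fin n) : Prop :=
  p.1 < p.2 ∧
    (len n (step n u p) = len n u + 1 ∨
     len n (step n u p) + 2 * ((p.2 : ℕ) - (p.1 : ℕ)) = len n u + 1)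

/-- The weight in `ℤ^{n-1}` of the edge labeled `p = (i,j)` starting at `u`:
`0` for a Bruhat cover, and `e_i + e_{i+1} + ⋯ + e_{j-1}` for a quantum edge.
(Here coordinates of `Fin (n-1)` are `0`-based: index `k` is the paper's `q_{k+1}`.) -/
def edgeWeight (n : ℕ) (u : Equiv.Perm (Fin n)) (p : Fin n × Fin n) : Fin (n - 1) → ℤ :=
  if len n (step n u p) = len n u + 1 then 0
  else fun k => if (p.1 : ℕ) ≤ (k : ℕ) ∧ (k : ℕ) < (p.2 : ℕ) then 1 else 0

/-- `isPath n u L v` : the list of labels `L` encodes a directed path from `u` to `v`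
in the quantum Bruhat graph `Γ_n`. -/
def isPath (n : ℕ) : Equiv.Perm (Fin n) → List (Fin n × Fin n) → Equiv.Perm (Fin n) → Prop
  | u, [], v => u = v
  | u, p :: ps, v => isQBEdge n u p ∧ isPath n (step n u p) ps v

/-- The weight of a directed path: the sum in `ℤ^{n-1}` of the weights of its edges. -/
def pathWeight (n : ℕ) : Equiv.Perm (Fin n) → List (Fin n × Fin n) → (Fin (n - 1) → ℤ)
  | _, [] => 0
  | u, p :: ps => edgeWeight n u p + pathWeight n (step n u p) ps

/-- Every edge of the path is length-increasing (a Bruhat cover). -/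
def allUp (n : ℕ) : Equiv.Perm (Fin n) → List (Fin n × Fin n) → Prop
  | _, [] => True
  | u, p :: ps => len n (step n u p) = len n u + 1 ∧ allUp n (step n u p) ps

/-- A path with labels `(a_1,b_1), …, (a_i,b_i)` is `y_k^i`-admissible if
`a_1 ≤ ⋯ ≤ a_i ≤ k < b_1, …, b_i` and the `b_t` are pairwise distinct.
(`k : Fin (n-1)` is `0`-based: it stands for the paper's `k+1`.) -/
def yAdm (n : ℕ) (k : Fin (n - 1)) (L : List (Fin n × Fin n)) : Prop :=
  List.Chain' (· ≤ ·) (L.map Prod.fst) ∧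
  (∀ p ∈ L, (p.1 : ℕ) ≤ (k : ℕ) ∧ (k : ℕ) < (p.2 : ℕ)) ∧
  (L.map Prod.snd).Nodup

/-- A path is `y^β`-admissible if it is a concatenation `P_1 ∘ ⋯ ∘ P_{n-1}` where
`P_k` is `y_k^{β_k}`-admissible. -/
def yBetaAdm (n : ℕ) (β : Fin (n - 1) → ℕ) (L : List (Fin n × Fin n)) : Prop :=
  ∃ Ls : Fin (n - 1) → List (Fin n × Fin n),
    L = (List.ofFn Ls).flatten ∧
    ∀ k : Fin (n - 1), (Ls k).length = β k ∧ yAdm n k (Ls k)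

/-- A path with labels `(a_1,b_1), …, (a_l,b_l)` is admissible if there are
`k_1 ≤ ⋯ ≤ k_l` with `a_t ≤ k_t < b_t` and the pairs `(k_t, b_t)` pairwise distinct. -/
def Adm (n : ℕ) (L : List (Fin n × Fin n)) : Prop :=
  ∃ ks : List ℕ, ks.length = L.length ∧ List.Chain' (· ≤ ·) ks ∧
    (∀ pr ∈ ks.zip L, (pr.2.1 : ℕ) ≤ pr.1 ∧ pr.1 < (pr.2.2 : ℕ)) ∧
    (ks.zip (L.map Prod.snd)).Nodup

/-- The longest permutation `w_o : i ↦ n + 1 - i` (0-based: `i ↦ n - 1 - i`). -/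
def wo (n : ℕ) : Equiv.Perm (Fin n) :=
  Function.Involutive.toPerm Fin.rev (fun i => Fin.rev_rev i)


namespace QBG
open Finset

variable {n : ℕ}

lemma swap_inv_char (a b : Fin n) (hab : a < b) (p : Fin n × Fin n) :
    (p.1 < p.2 ∧ swap a b p.2 < swap a b p.1) ↔
      (p = (a, b) ∨ (p.1 = a ∧ p.2 ∈ Ioo a b) ∨ (p.2 = b ∧ p.1 ∈ Ioo a b)) := by
  obtain ⟨x, y⟩ := p
  have hab' : (a : ℕ) < b := hab
  simp only [swap_apply_def, mem_Ioo, Prod.mk.injEq]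
  split_ifs <;> simp only [Fin.lt_def, Fin.ext_iff, not_and, not_lt] at * <;> omega

/-- The basic length-change identity for multiplying by a transposition. -/
lemma len_swap_identity (u : Perm (Fin n)) (a b : Fin n) (hab : a < b) :
    len n (u * swap a b) + 2 * ((if u b < u a then 1 else 0)
        + ((Ioo a b).filter (fun x => u x < u a)).card
        + ((Ioo a b).filter (fun x => u b < u x)).card)
      = len n u + (2 * ((b : ℕ) - (a : ℕ)) - 1) := by
  classical
  set s := swap a b with hs
  -- step A : reindex the inversions of `u * s`
  have lenA : len n (u * s) =
      (univ.filter (fun p : Fin n × Fin n => s p.1 < s p.2 ∧ u p.2 < u p.1)).card := by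
    apply Finset.card_nbij' (i := fun p => (s p.1, s p.2)) (j := fun p => (s p.1, s p.2))
    · intro p hp
      simp only [mem_filter, mem_univ, true_and, Perm.mul_apply] at hp ⊢
      simpa [hs, Equiv.swap_apply_self] using hp
    · intro p hp
      simp only [mem_filter, mem_univ, true_and, Perm.mul_apply] at hp ⊢
      simpa [hs, Equiv.swap_apply_self] using hp
    · intro p _; simp [hs, Equiv.swap_apply_self]
    · intro p _; simp [hs, Equiv.swap_apply_self]
  set A1 := univ.filter (fun p : Fin n × Fin n => p.1 < p.2 ∧ s p.1 < s p.2 ∧ u p.2 < u p.1) with hA1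
  set A2 := univ.filter (fun p : Fin n × Fin n => p.2 < p.1 ∧ s p.1 < s p.2 ∧ u p.2 < u p.1) with hA2
  set B2 := univ.filter (fun p : Fin n × Fin n => p.1 < p.2 ∧ s p.2 < s p.1 ∧ u p.2 < u p.1) with hB2
  set C := univ.filter (fun p : Fin n × Fin n => p.1 < p.2 ∧ s p.2 < s p.1 ∧ u p.1 < u p.2) with hC
  set D := univ.filter (fun p : Fin n × Fin n => p.1 < p.2 ∧ s p.2 < s p.1) with hD
  have cardA : len n (u * s) = A1.card + A2.card := by
    rw [lenA, ← card_union_of_disjoint]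
    · congr 1
      ext p
      simp only [hA1, hA2, mem_filter, mem_univ, true_and, mem_union]
      constructor
      · rintro ⟨h1, h2⟩
        have hne : p.1 ≠ p.2 := fun h => absurd h1 (by simp [h])
        rcases hne.lt_or_gt with h | h
        · exact Or.inl ⟨h, h1, h2⟩
        · exact Or.inr ⟨h, h1, h2⟩
      · rintro (⟨_, h⟩ | ⟨_, h⟩) <;> exact h
    · rw [disjoint_left]
      intro p h1 h2
      simp only [hA1, hA2, mem_filter] at h1 h2
      exact absurd h1.2.1 (asymm h2.2.1)
  have cardB : len n u = A1.card + B2.card := by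
    rw [show len n u = (univ.filter (fun p : Fin n × Fin n => p.1 < p.2 ∧ u p.2 < u p.1)).card from rfl,
      ← card_union_of_disjoint]
    · congr 1
      ext p
      simp only [hA1, hB2, mem_filter, mem_univ, true_and, mem_union]
      constructor
      · rintro ⟨h1, h2⟩
        have hne : s p.1 ≠ s p.2 := fun h => absurd (s.injective h) h1.ne
        rcases hne.lt_or_gt with h | h
        · exact Or.inl ⟨h1, h, h2⟩
        · exact Or.inr ⟨h1, h, h2⟩
      · rintro (⟨h1, _, h2⟩ | ⟨h1, _, h2⟩) <;> exact ⟨h1, h2⟩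
    · rw [disjoint_left]
      intro p h1 h2
      simp only [hA1, hB2, mem_filter] at h1 h2
      exact absurd h1.2.2.1 (asymm h2.2.2.1)
  have cardA2C : A2.card = C.card := by
    apply Finset.card_nbij' (i := fun p => (p.2, p.1)) (j := fun p => (p.2, p.1))
    · intro p hp
      simp only [hA2, hC, mem_coe, mem_filter, mem_univ, true_and] at hp ⊢
      exact ⟨hp.1, hp.2.1, hp.2.2⟩
    · intro p hp
      simp only [hA2, hC, mem_coe, mem_filter, mem_univ, true_and] at hp ⊢
      exact ⟨hp.1, hp.2.1, hp.2.2⟩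
    · intro p _; simp
    · intro p _; simp
  have cardD : D.card = C.card + B2.card := by
    rw [← card_union_of_disjoint]
    · congr 1
      ext p
      simp only [hC, hB2, hD, mem_filter, mem_univ, true_and, mem_union]
      constructor
      · rintro ⟨h1, h2⟩
        have hne : u p.1 ≠ u p.2 := fun h => absurd (u.injective h) h1.ne
        rcases hne.lt_or_gt with h | h
        · exact Or.inl ⟨h1, h2, h⟩
        · exact Or.inr ⟨h1, h2, h⟩
      · rintro (⟨h1, h2, _⟩ | ⟨h1, h2, _⟩) <;> exact ⟨h1, h2⟩
    · rw [disjoint_left]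
      intro p h1 h2
      simp only [hC, hB2, mem_filter] at h1 h2
      exact absurd h1.2.2.2 (asymm h2.2.2.2)
  -- explicit description of D
  have hDeq : D = insert ((a, b) : Fin n × Fin n)
      (((Ioo a b).map ⟨fun x => (a, x), fun x y h => by simpa using h⟩) ∪
       ((Ioo a b).map ⟨fun x => (x, b), fun x y h => by simpa using h⟩)) := by
    ext p
    rw [hD, mem_filter]
    simp only [mem_univ, true_and, mem_insert, mem_union, mem_map,
      Function.Embedding.coeFn_mk]
    rw [swap_inv_char a b hab p]
    constructor
    · rintro (h | ⟨h1, h2⟩ | ⟨h1, h2⟩)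
      · exact Or.inl h
      · exact Or.inr (Or.inl ⟨p.2, h2, by rw [← h1]; rfl⟩)
      · exact Or.inr (Or.inr ⟨p.1, h2, by rw [← h1]; rfl⟩)
    · rintro (h | ⟨x, hx, hxp⟩ | ⟨x, hx, hxp⟩)
      · exact Or.inl h
      · exact Or.inr (Or.inl ⟨by rw [← hxp]; rfl, by rw [← hxp]; exact hx⟩)
      · exact Or.inr (Or.inr ⟨by rw [← hxp]; rfl, by rw [← hxp]; exact hx⟩)
  have hab' : (a : ℕ) < b := hab
  have hnm : ((a, b) : Fin n × Fin n) ∉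
      (((Ioo a b).map ⟨fun x => (a, x), fun x y h => by simpa using h⟩) ∪
       ((Ioo a b).map ⟨fun x => (x, b), fun x y h => by simpa using h⟩)) := by
    simp only [mem_union, mem_map, Function.Embedding.coeFn_mk, mem_Ioo, Prod.mk.injEq]
    rintro (⟨x, ⟨_, h2⟩, _, rfl⟩ | ⟨x, ⟨h1, _⟩, rfl, _⟩)
    · exact absurd h2 (lt_irrefl _)
    · exact absurd h1 (lt_irrefl _)
  have hdisj2 : Disjoint
      ((Ioo a b).map ⟨fun x => (a, x), fun x y h => by simpa using h⟩)
      ((Ioo a b).map ⟨fun x => (x, b), fun x y h => by simpa using h⟩) := by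
    rw [disjoint_left]
    intro p h1 h2
    simp only [mem_map, Function.Embedding.coeFn_mk, mem_Ioo] at h1 h2
    obtain ⟨x, hx, rfl⟩ := h1
    obtain ⟨y, hy, heq⟩ := h2
    rw [Prod.mk.injEq] at heq
    rw [show b = x from heq.2] at hx
    exact absurd hx.2 (lt_irrefl _)
  have hcIoo : (Ioo a b).card = (b : ℕ) - (a : ℕ) - 1 := Fin.card_Ioo ..
  have cardDval : D.card = 1 + (((b : ℕ) - (a : ℕ) - 1) + ((b : ℕ) - (a : ℕ) - 1)) := by
    rw [hDeq, card_insert_of_notMem hnm, card_union_of_disjoint hdisj2, card_map, card_map,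
      hcIoo, Nat.add_comm]
  have hB2D : B2 = D.filter (fun p => u p.2 < u p.1) := by
    rw [hB2, hD, filter_filter]
    congr 1
    ext p
    tauto
  have hf1 : ((Ioo a b).filter
        ((fun p : Fin n × Fin n => u p.2 < u p.1) ∘
          (⟨fun x => (a, x), fun x y h => by simpa using h⟩ : Fin n ↪ Fin n × Fin n))) =
      (Ioo a b).filter (fun x => u x < u a) := by
    ext x
    simp [Function.comp, Function.Embedding.coeFn_mk]
    exact fun _ _ => Iff.rfl
  have hf2 : ((Ioo a b).filter
        ((fun p : Fin n × Fin n => u p.2 < u p.1) ∘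
          (⟨fun x => (x, b), fun x y h => by simpa using h⟩ : Fin n ↪ Fin n × Fin n))) =
      (Ioo a b).filter (fun x => u b < u x) := by
    ext x
    simp [Function.comp, Function.Embedding.coeFn_mk]
    exact fun _ _ => Iff.rfl
  have hdisj2' : Disjoint
      (((Ioo a b).filter (fun x => u x < u a)).map ⟨fun x => (a, x), fun x y h => by simpa using h⟩)
      (((Ioo a b).filter (fun x => u b < u x)).map ⟨fun x => (x, b), fun x y h => by simpa using h⟩) :=
    hdisj2.mono (map_subset_map.mpr (filter_subset _ _)) (map_subset_map.mpr (filter_subset _ _))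
  have hnm' : ((a, b) : Fin n × Fin n) ∉
      (((Ioo a b).filter (fun x => u x < u a)).map ⟨fun x => (a, x), fun x y h => by simpa using h⟩) ∪
      (((Ioo a b).filter (fun x => u b < u x)).map ⟨fun x => (x, b), fun x y h => by simpa using h⟩) := by
    intro hmem
    refine hnm ?_
    rcases mem_union.mp hmem with h | h
    · obtain ⟨x, hx, hxe⟩ := mem_map.mp h
      exact mem_union_left _ (mem_map.mpr ⟨x, mem_of_mem_filter _ hx, hxe⟩)
    · obtain ⟨x, hx, hxe⟩ := mem_map.mp h
      exact mem_union_right _ (mem_map.mpr ⟨x, mem_of_mem_filter _ hx, hxe⟩)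
  have cardB2val : B2.card = (if u b < u a then 1 else 0)
      + ((Ioo a b).filter (fun x => u x < u a)).card
      + ((Ioo a b).filter (fun x => u b < u x)).card := by
    rw [hB2D, hDeq, filter_insert, filter_union, filter_map, filter_map, hf1, hf2]
    by_cases hba : u b < u a
    · rw [if_pos hba, if_pos hba, card_insert_of_notMem hnm', card_union_of_disjoint hdisj2',
        card_map, card_map]
      omega
    · rw [if_neg hba, if_neg hba, card_union_of_disjoint hdisj2', card_map, card_map]
      omega
  rw [show (if u b < u a then 1 else 0)
      + ((Ioo a b).filter (fun x => u x < u a)).card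
      + ((Ioo a b).filter (fun x => u b < u x)).card = B2.card from cardB2val.symm]
  omega

end QBG

namespace QBG2
open Finset
open QBG
variable {n : ℕ}

/-- `u → u s_{ab}` is a Bruhat cover (going up by 1). -/
def UpE (u : Equiv.Perm (Fin n)) (a b : Fin n) : Prop :=
  u a < u b ∧ ∀ x, a < x → x < b → ¬(u a < u x ∧ u x < u b)

/-- `u → u s_{ab}` is a maximal-drop (quantum) edge. -/
def DnE (u : Equiv.Perm (Fin n)) (a b : Fin n) : Prop :=
  u b < u a ∧ ∀ x, a < x → x < b → (u b < u x ∧ u x < u a)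

lemma partition_up (u : Equiv.Perm (Fin n)) (a b : Fin n) (hu : u a < u b) :
    ((Ioo a b).filter (fun x => u x < u a)).card + ((Ioo a b).filter (fun x => u b < u x)).card
      + ((Ioo a b).filter (fun x => u a < u x ∧ u x < u b)).card = (Ioo a b).card := by
  classical
  have s1 : (Ioo a b).filter (fun x => u x < u a) ∪
      ((Ioo a b).filter (fun x => u b < u x) ∪
        (Ioo a b).filter (fun x => u a < u x ∧ u x < u b)) = Ioo a b := by
    ext x
    simp only [mem_union, mem_filter, mem_Ioo]
    constructor
    · rintro (⟨h, _⟩ | ⟨h, _⟩ | ⟨h, _⟩) <;> exact h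
    · intro hx
      have hxa : u x ≠ u a := fun h => (ne_of_gt hx.1) (u.injective h)
      have hxb : u x ≠ u b := fun h => (ne_of_lt hx.2) (u.injective h)
      rcases lt_or_gt_of_ne hxa with h1 | h1
      · exact Or.inl ⟨hx, h1⟩
      · rcases lt_or_gt_of_ne hxb with h2 | h2
        · exact Or.inr (Or.inr ⟨hx, h1, h2⟩)
        · exact Or.inr (Or.inl ⟨hx, h2⟩)
  have d2 : Disjoint ((Ioo a b).filter (fun x => u b < u x))
      ((Ioo a b).filter (fun x => u a < u x ∧ u x < u b)) := by
    rw [disjoint_left]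
    intro x h1 h2
    exact absurd (mem_filter.mp h1).2 (asymm (mem_filter.mp h2).2.2)
  have d1 : Disjoint ((Ioo a b).filter (fun x => u x < u a))
      (((Ioo a b).filter (fun x => u b < u x) ∪
        (Ioo a b).filter (fun x => u a < u x ∧ u x < u b))) := by
    rw [disjoint_left]
    intro x h1 h2
    have hxa := (mem_filter.mp h1).2
    rcases mem_union.mp h2 with h | h
    · exact absurd (hu.trans (mem_filter.mp h).2) (asymm hxa)
    · exact absurd (mem_filter.mp h).2.1 (asymm hxa)
  rw [add_assoc, ← card_union_of_disjoint d2, ← card_union_of_disjoint d1, s1]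

lemma up_iff (u : Equiv.Perm (Fin n)) (a b : Fin n) (hab : a < b) :
    len n (u * Equiv.swap a b) = len n u + 1 ↔ UpE u a b := by
  have hid := len_swap_identity u a b hab
  have hab' : (a : ℕ) < b := hab
  have hIoo : (Ioo a b).card = (b : ℕ) - (a : ℕ) - 1 := Fin.card_Ioo ..
  constructor
  · intro h
    rw [h] at hid
    by_cases hba : u b < u a
    · exfalso
      rw [if_pos hba] at hid
      have hsub : Ioo a b ⊆ (Ioo a b).filter (fun x => u x < u a) ∪
          (Ioo a b).filter (fun x => u b < u x) := by
        intro x hx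
        rcases lt_or_ge (u x) (u a) with h1 | h1
        · exact mem_union_left _ (mem_filter.mpr ⟨hx, h1⟩)
        · exact mem_union_right _ (mem_filter.mpr ⟨hx, lt_of_lt_of_le hba h1⟩)
      have := (card_le_card hsub).trans (card_union_le _ _)
      omega
    · have hu : u a < u b := by
        have hne : u a ≠ u b := fun h => (ne_of_lt hab) (u.injective h)
        exact lt_of_le_of_ne (not_lt.mp hba) hne
      refine ⟨hu, ?_⟩
      rw [if_neg hba] at hid
      have key1 := partition_up u a b hu
      have hbet0 : ((Ioo a b).filter (fun x => u a < u x ∧ u x < u b)).card = 0 := by omega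
      intro x hx1 hx2 hx3
      rw [card_eq_zero] at hbet0
      have : x ∈ (Ioo a b).filter (fun x => u a < u x ∧ u x < u b) :=
        mem_filter.mpr ⟨mem_Ioo.mpr ⟨hx1, hx2⟩, hx3⟩
      rw [hbet0] at this
      exact absurd this (notMem_empty _)
  · rintro ⟨hu, hall⟩
    have hba : ¬ u b < u a := asymm hu
    rw [if_neg hba] at hid
    have key1 := partition_up u a b hu
    have hbet0 : ((Ioo a b).filter (fun x => u a < u x ∧ u x < u b)) = ∅ :=
      filter_eq_empty_iff.mpr (fun x hx => hall x (mem_Ioo.mp hx).1 (mem_Ioo.mp hx).2)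
    rw [hbet0, card_empty] at key1
    omega

lemma down_iff (u : Equiv.Perm (Fin n)) (a b : Fin n) (hab : a < b) :
    len n (u * Equiv.swap a b) + 2 * ((b : ℕ) - (a : ℕ)) = len n u + 1 ↔ DnE u a b := by
  have hid := len_swap_identity u a b hab
  have hab' : (a : ℕ) < b := hab
  have hIoo : (Ioo a b).card = (b : ℕ) - (a : ℕ) - 1 := Fin.card_Ioo ..
  have c1le := card_filter_le (Ioo a b) (fun x => u x < u a)
  have c2le := card_filter_le (Ioo a b) (fun x => u b < u x)
  constructor
  · intro h
    by_cases hba : u b < u a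
    · rw [if_pos hba] at hid
      refine ⟨hba, ?_⟩
      have hc1 : (Ioo a b).filter (fun x => u x < u a) = Ioo a b :=
        eq_of_subset_of_card_le (filter_subset _ _) (by omega)
      have hc2 : (Ioo a b).filter (fun x => u b < u x) = Ioo a b :=
        eq_of_subset_of_card_le (filter_subset _ _) (by omega)
      intro x hx1 hx2
      have hxm : x ∈ Ioo a b := mem_Ioo.mpr ⟨hx1, hx2⟩
      constructor
      · have : x ∈ (Ioo a b).filter (fun x => u b < u x) := hc2.symm ▸ hxm
        exact (mem_filter.mp this).2
      · have : x ∈ (Ioo a b).filter (fun x => u x < u a) := hc1.symm ▸ hxm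
        exact (mem_filter.mp this).2
    · exfalso
      rw [if_neg hba] at hid
      omega
  · rintro ⟨hba, hall⟩
    rw [if_pos hba] at hid
    have hc1 : (Ioo a b).filter (fun x => u x < u a) = Ioo a b :=
      filter_eq_self.mpr (fun x hx => (hall x (mem_Ioo.mp hx).1 (mem_Ioo.mp hx).2).2)
    have hc2 : (Ioo a b).filter (fun x => u b < u x) = Ioo a b :=
      filter_eq_self.mpr (fun x hx => (hall x (mem_Ioo.mp hx).1 (mem_Ioo.mp hx).2).1)
    rw [hc1, hc2, hIoo] at hid
    omega

end QBG2


namespace QBG3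
open Finset Equiv QBG QBG2

variable {n : ℕ}

lemma isQBEdge_iff (u : Equiv.Perm (Fin n)) (p : Fin n × Fin n) :
    isQBEdge n u p ↔ p.1 < p.2 ∧ (UpE u p.1 p.2 ∨ DnE u p.1 p.2) := by
  unfold isQBEdge step
  exact and_congr_right fun h => or_congr (up_iff u p.1 p.2 h) (down_iff u p.1 p.2 h)

lemma edgeWeight_up {u : Equiv.Perm (Fin n)} {p : Fin n × Fin n} (h : p.1 < p.2)
    (hup : UpE u p.1 p.2) : edgeWeight n u p = 0 := by
  unfold edgeWeight step
  rw [if_pos ((up_iff u p.1 p.2 h).mpr hup)]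

lemma edgeWeight_dn {u : Equiv.Perm (Fin n)} {p : Fin n × Fin n} (h : p.1 < p.2)
    (hdn : DnE u p.1 p.2) :
    edgeWeight n u p = fun k : Fin (n-1) => if (p.1 : ℕ) ≤ (k : ℕ) ∧ (k : ℕ) < (p.2 : ℕ) then (1:ℤ) else 0 := by
  unfold edgeWeight step
  rw [if_neg]
  intro hup
  exact absurd ((up_iff u p.1 p.2 h).mp hup).1 (asymm hdn.1)

lemma swap_comm_disj {a b c d : Fin n} (h1 : a ≠ c) (h2 : a ≠ d) (h3 : b ≠ c) (h4 : b ≠ d) :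
    Equiv.swap a b * Equiv.swap c d = Equiv.swap c d * Equiv.swap a b := by
  have hd : (Equiv.swap a b).Disjoint (Equiv.swap c d) := by
    intro x
    by_cases hxa : x = a
    · subst hxa; exact Or.inr (swap_apply_of_ne_of_ne h1 h2)
    · by_cases hxb : x = b
      · subst hxb; exact Or.inr (swap_apply_of_ne_of_ne h3 h4)
      · exact Or.inl (swap_apply_of_ne_of_ne hxa hxb)
  exact hd.commute.eq

lemma UpE_congr {u u' : Equiv.Perm (Fin n)} {a b : Fin n}
    (hab : a ≤ b) (h : ∀ x, a ≤ x → x ≤ b → u x = u' x) : UpE u a b ↔ UpE u' a b := by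
  constructor <;> rintro ⟨h1, h2⟩
  · refine ⟨by rw [← h a le_rfl hab, ← h b hab le_rfl]; exact h1, fun x hx1 hx2 hcon => ?_⟩
    exact h2 x hx1 hx2 (by rwa [h a le_rfl hab, h x hx1.le hx2.le, h b hab le_rfl])
  · refine ⟨by rw [h a le_rfl hab, h b hab le_rfl]; exact h1, fun x hx1 hx2 hcon => ?_⟩
    exact h2 x hx1 hx2 (by rwa [← h a le_rfl hab, ← h x hx1.le hx2.le, ← h b hab le_rfl])

lemma DnE_congr {u u' : Equiv.Perm (Fin n)} {a b : Fin n}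
    (hab : a ≤ b) (h : ∀ x, a ≤ x → x ≤ b → u x = u' x) : DnE u a b ↔ DnE u' a b := by
  constructor <;> rintro ⟨h1, h2⟩
  · refine ⟨by rw [← h a le_rfl hab, ← h b hab le_rfl]; exact h1, fun x hx1 hx2 => ?_⟩
    have := h2 x hx1 hx2
    rwa [h a le_rfl hab, h x hx1.le hx2.le, h b hab le_rfl] at this
  · refine ⟨by rw [h a le_rfl hab, h b hab le_rfl]; exact h1, fun x hx1 hx2 => ?_⟩
    have := h2 x hx1 hx2
    rwa [← h a le_rfl hab, ← h x hx1.le hx2.le, ← h b hab le_rfl] at this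

lemma swap_mem_Ioo {a b c d : Fin n} (h1 : a < c) (h2 : c < d) (h3 : d < b) :
    ∀ x, a < x → x < b → (a < Equiv.swap c d x ∧ Equiv.swap c d x < b) := by
  intro x hx1 hx2
  rcases eq_or_ne x c with rfl | hc
  · rw [swap_apply_left]; exact ⟨h1.trans h2, h3⟩
  · rcases eq_or_ne x d with rfl | hd
    · rw [swap_apply_right]; exact ⟨h1, h2.trans h3⟩
    · rw [swap_apply_of_ne_of_ne hc hd]; exact ⟨hx1, hx2⟩

lemma ends_swap_inner {u : Equiv.Perm (Fin n)} {a b c d : Fin n}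
    (h1 : a < c) (h2 : c < d) (h3 : d < b) :
    (u * Equiv.swap c d) a = u a ∧ (u * Equiv.swap c d) b = u b := by
  constructor
  · rw [Equiv.Perm.mul_apply, swap_apply_of_ne_of_ne (ne_of_lt h1) (ne_of_lt (h1.trans h2))]
  · rw [Equiv.Perm.mul_apply,
      swap_apply_of_ne_of_ne (ne_of_gt (h2.trans h3)) (ne_of_gt h3)]

lemma UpE_swap_inner (u : Equiv.Perm (Fin n)) {a b c d : Fin n}
    (h1 : a < c) (h2 : c < d) (h3 : d < b) :
    UpE (u * Equiv.swap c d) a b ↔ UpE u a b := by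
  obtain ⟨ea, eb⟩ := ends_swap_inner (u := u) h1 h2 h3
  unfold UpE
  rw [ea, eb]
  refine and_congr_right fun _ => ⟨fun H x hx1 hx2 hcon => ?_, fun H x hx1 hx2 hcon => ?_⟩
  · obtain ⟨hy1, hy2⟩ := swap_mem_Ioo h1 h2 h3 x hx1 hx2
    exact H (Equiv.swap c d x) hy1 hy2 (by rwa [Equiv.Perm.mul_apply, Equiv.swap_apply_self])
  · obtain ⟨hy1, hy2⟩ := swap_mem_Ioo h1 h2 h3 x hx1 hx2
    rw [Equiv.Perm.mul_apply] at hcon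
    exact H (Equiv.swap c d x) hy1 hy2 hcon

lemma DnE_swap_inner (u : Equiv.Perm (Fin n)) {a b c d : Fin n}
    (h1 : a < c) (h2 : c < d) (h3 : d < b) :
    DnE (u * Equiv.swap c d) a b ↔ DnE u a b := by
  obtain ⟨ea, eb⟩ := ends_swap_inner (u := u) h1 h2 h3
  unfold DnE
  rw [ea, eb]
  refine and_congr_right fun _ => ⟨fun H x hx1 hx2 => ?_, fun H x hx1 hx2 => ?_⟩
  · obtain ⟨hy1, hy2⟩ := swap_mem_Ioo h1 h2 h3 x hx1 hx2
    have := H (Equiv.swap c d x) hy1 hy2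
    rwa [Equiv.Perm.mul_apply, Equiv.swap_apply_self] at this
  · obtain ⟨hy1, hy2⟩ := swap_mem_Ioo h1 h2 h3 x hx1 hx2
    have := H (Equiv.swap c d x) hy1 hy2
    rwa [Equiv.Perm.mul_apply]

end QBG3


namespace QBG4
open Finset Equiv QBG QBG2 QBG3

variable {n : ℕ}

lemma crossing (u : Equiv.Perm (Fin n)) {a1 b1 a2 b2 : Fin n}
    (h21 : a2 < a1) (h12 : a1 < b2) (h2b : b2 < b1)
    (E1 : UpE u a1 b1 ∨ DnE u a1 b1)
    (E2 : UpE (u * Equiv.swap a1 b1) a2 b2 ∨ DnE (u * Equiv.swap a1 b1) a2 b2) :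
    (UpE (u * Equiv.swap a1 b1) a2 b2 → UpE u a2 b2) ∧
    (DnE (u * Equiv.swap a1 b1) a2 b2 → DnE u a2 b2) ∧
    (UpE u a1 b1 → UpE (u * Equiv.swap a2 b2) a1 b1) ∧
    (DnE u a1 b1 → DnE (u * Equiv.swap a2 b2) a1 b1) := by
  have h11 : a1 < b1 := h12.trans h2b
  have h22 : a2 < b2 := h21.trans h12
  have ea2 : (u * Equiv.swap a1 b1) a2 = u a2 := by
    rw [Equiv.Perm.mul_apply, swap_apply_of_ne_of_ne (ne_of_lt h21) (ne_of_lt (h21.trans h11))]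
  have eb2 : (u * Equiv.swap a1 b1) b2 = u b2 := by
    rw [Equiv.Perm.mul_apply, swap_apply_of_ne_of_ne (ne_of_gt h12) (ne_of_lt h2b)]
  have ea1 : (u * Equiv.swap a1 b1) a1 = u b1 := by
    rw [Equiv.Perm.mul_apply, swap_apply_left]
  have ex1 : ∀ x, x ≠ a1 → x < b2 → (u * Equiv.swap a1 b1) x = u x := fun x hx hxb => by
    rw [Equiv.Perm.mul_apply, swap_apply_of_ne_of_ne hx (ne_of_lt (hxb.trans h2b))]
  have fa1 : (u * Equiv.swap a2 b2) a1 = u a1 := by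
    rw [Equiv.Perm.mul_apply, swap_apply_of_ne_of_ne (ne_of_gt h21) (ne_of_lt h12)]
  have fb1 : (u * Equiv.swap a2 b2) b1 = u b1 := by
    rw [Equiv.Perm.mul_apply,
      swap_apply_of_ne_of_ne (ne_of_gt (h21.trans h11)) (ne_of_gt h2b)]
  have fb2 : (u * Equiv.swap a2 b2) b2 = u a2 := by
    rw [Equiv.Perm.mul_apply, swap_apply_right]
  have fx : ∀ x, a1 < x → x ≠ b2 → (u * Equiv.swap a2 b2) x = u x := fun x hx hxb => by
    rw [Equiv.Perm.mul_apply, swap_apply_of_ne_of_ne (ne_of_gt (h21.trans hx)) hxb]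
  have nv : ∀ x y : Fin n, x ≠ y → ¬ ((u x : ℕ) = (u y : ℕ)) := fun x y hxy h =>
    hxy (u.injective (Fin.val_injective h))
  have d12 := nv a1 b1 (ne_of_lt h11)
  have d1a2 := nv a1 a2 (ne_of_gt h21)
  have d1b2 := nv a1 b2 (ne_of_lt h12)
  have db1a2 := nv b1 a2 (ne_of_gt (h21.trans h11))
  have db1b2 := nv b1 b2 (ne_of_gt h2b)
  have da2b2 := nv a2 b2 (ne_of_lt h22)
  rcases E1 with hU1 | hD1 <;> rcases E2 with hU2 | hD2
  · -- (Up, Up)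
    have K1 : ¬(u a1 < u b2 ∧ u b2 < u b1) := hU1.2 b2 h12 h2b
    have K2 : ¬(u a2 < u b1 ∧ u b1 < u b2) := by
      have := hU2.2 a1 h21 h12
      rwa [ea2, ea1, eb2] at this
    have F1 : u a1 < u b1 := hU1.1
    have F2 : u a2 < u b2 := by have := hU2.1; rwa [ea2, eb2] at this
    refine ⟨fun _ => ⟨F2, fun x hx1 hx2 hcon => ?_⟩,
            fun hD2' => absurd hU2.1 (asymm hD2'.1),
            fun _ => ⟨by rw [fa1, fb1]; exact F1, fun x hx1 hx2 hcon => ?_⟩,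
            fun hD1' => absurd hU1.1 (asymm hD1'.1)⟩
    · by_cases hx : x = a1
      · subst hx
        simp only [Fin.lt_def] at K1 K2 F1 F2 hcon
        omega
      · exact hU2.2 x hx1 hx2 (by rw [ea2, ex1 x hx hx2, eb2]; exact hcon)
    · by_cases hx : x = b2
      · subst hx
        rw [fa1, fb2, fb1] at hcon
        simp only [Fin.lt_def] at K1 K2 F1 F2 hcon
        omega
      · exact hU1.2 x hx1 hx2 (by rwa [fa1, fx x hx1 hx, fb1] at hcon)
  · -- (Up, Dn)
    have K1 : ¬(u a1 < u b2 ∧ u b2 < u b1) := hU1.2 b2 h12 h2b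
    have K2 : u b2 < u b1 ∧ u b1 < u a2 := by
      have := hD2.2 a1 h21 h12
      rwa [ea2, ea1, eb2] at this
    have F1 : u a1 < u b1 := hU1.1
    have F2 : u b2 < u a2 := by have := hD2.1; rwa [ea2, eb2] at this
    refine ⟨fun hU2' => absurd hU2'.1 (asymm hD2.1),
            fun _ => ⟨F2, fun x hx1 hx2 => ?_⟩,
            fun _ => ⟨by rw [fa1, fb1]; exact F1, fun x hx1 hx2 hcon => ?_⟩,
            fun hD1' => absurd hU1.1 (asymm hD1'.1)⟩
    · by_cases hx : x = a1
      · subst hx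
        simp only [Fin.lt_def] at K1 K2 F1 F2 ⊢
        omega
      · have := hD2.2 x hx1 hx2
        rwa [ea2, ex1 x hx hx2, eb2] at this
    · by_cases hx : x = b2
      · subst hx
        rw [fa1, fb2, fb1] at hcon
        simp only [Fin.lt_def] at K1 K2 F1 F2 hcon
        omega
      · exact hU1.2 x hx1 hx2 (by rwa [fa1, fx x hx1 hx, fb1] at hcon)
  · -- (Dn, Up)
    have K1 : u b1 < u b2 ∧ u b2 < u a1 := hD1.2 b2 h12 h2b
    have K2 : ¬(u a2 < u b1 ∧ u b1 < u b2) := by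
      have := hU2.2 a1 h21 h12
      rwa [ea2, ea1, eb2] at this
    have F1 : u b1 < u a1 := hD1.1
    have F2 : u a2 < u b2 := by have := hU2.1; rwa [ea2, eb2] at this
    refine ⟨fun _ => ⟨F2, fun x hx1 hx2 hcon => ?_⟩,
            fun hD2' => absurd hU2.1 (asymm hD2'.1),
            fun hU1' => absurd hU1'.1 (asymm hD1.1),
            fun _ => ⟨by rw [fa1, fb1]; exact F1, fun x hx1 hx2 => ?_⟩⟩
    · by_cases hx : x = a1
      · subst hx
        simp only [Fin.lt_def] at K1 K2 F1 F2 hcon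
        omega
      · exact hU2.2 x hx1 hx2 (by rw [ea2, ex1 x hx hx2, eb2]; exact hcon)
    · by_cases hx : x = b2
      · subst hx
        rw [fb1, fb2, fa1]
        simp only [Fin.lt_def] at K1 K2 F1 F2 ⊢
        omega
      · rw [fb1, fx x hx1 hx, fa1]
        exact hD1.2 x hx1 hx2
  · -- (Dn, Dn) : impossible
    have K1 : u b1 < u b2 ∧ u b2 < u a1 := hD1.2 b2 h12 h2b
    have K2 : u b2 < u b1 ∧ u b1 < u a2 := by
      have := hD2.2 a1 h21 h12
      rwa [ea2, ea1, eb2] at this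
    exact absurd K1.1 (asymm K2.1)

end QBG4


namespace QBG5
open Finset Equiv QBG QBG2 QBG3 QBG4

variable {n : ℕ}

lemma commute_edges (u : Equiv.Perm (Fin n)) (p q : Fin n × Fin n)
    (hq1 : q.1 < p.1) (hp1 : p.1 < q.2) (hbb : p.2 ≠ q.2)
    (e1 : isQBEdge n u p) (e2 : isQBEdge n (step n u p) q) :
    isQBEdge n u q ∧ isQBEdge n (step n u q) p ∧
      step n (step n u p) q = step n (step n u q) p ∧
      edgeWeight n u p + edgeWeight n (step n u p) q
        = edgeWeight n u q + edgeWeight n (step n u q) p := by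
  obtain ⟨hp, E1⟩ := (isQBEdge_iff u p).mp e1
  have hstep : step n u p = u * Equiv.swap p.1 p.2 := rfl
  obtain ⟨hq, E2⟩ := (isQBEdge_iff (u * Equiv.swap p.1 p.2) q).mp (hstep ▸ e2)
  -- the four transfer implications
  obtain ⟨C1, C2, C3, C4⟩ :
      (UpE (u * Equiv.swap p.1 p.2) q.1 q.2 → UpE u q.1 q.2) ∧
      (DnE (u * Equiv.swap p.1 p.2) q.1 q.2 → DnE u q.1 q.2) ∧
      (UpE u p.1 p.2 → UpE (u * Equiv.swap q.1 q.2) p.1 p.2) ∧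
      (DnE u p.1 p.2 → DnE (u * Equiv.swap q.1 q.2) p.1 p.2) := by
    rcases lt_or_gt_of_ne hbb with hlt | hgt
    · -- p.2 < q.2 : nested  q.1 < p.1 < p.2 < q.2
      have Tq : UpE (u * Equiv.swap p.1 p.2) q.1 q.2 ↔ UpE u q.1 q.2 :=
        UpE_swap_inner u hq1 hp hlt
      have Tqd : DnE (u * Equiv.swap p.1 p.2) q.1 q.2 ↔ DnE u q.1 q.2 :=
        DnE_swap_inner u hq1 hp hlt
      have hval : ∀ x, p.1 ≤ x → x ≤ p.2 → u x = (u * Equiv.swap q.1 q.2) x := by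
        intro x hx1 hx2
        rw [Equiv.Perm.mul_apply,
          swap_apply_of_ne_of_ne (ne_of_gt (lt_of_lt_of_le hq1 hx1))
            (ne_of_lt (lt_of_le_of_lt hx2 hlt))]
      have Tp : UpE u p.1 p.2 ↔ UpE (u * Equiv.swap q.1 q.2) p.1 p.2 :=
        UpE_congr (le_of_lt hp) hval
      have Tpd : DnE u p.1 p.2 ↔ DnE (u * Equiv.swap q.1 q.2) p.1 p.2 :=
        DnE_congr (le_of_lt hp) hval
      exact ⟨Tq.mp, Tqd.mp, Tp.mp, Tpd.mp⟩
    · -- q.2 < p.2 : crossing  q.1 < p.1 < q.2 < p.2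
      exact crossing u hq1 hp1 hgt E1 E2
  have hcomm : Equiv.swap p.1 p.2 * Equiv.swap q.1 q.2
      = Equiv.swap q.1 q.2 * Equiv.swap p.1 p.2 :=
    swap_comm_disj (ne_of_gt hq1) (ne_of_lt hp1) (ne_of_gt (hq1.trans hp))
      hbb
  have hstepcomm : step n (step n u p) q = step n (step n u q) p := by
    show u * Equiv.swap p.1 p.2 * Equiv.swap q.1 q.2
        = u * Equiv.swap q.1 q.2 * Equiv.swap p.1 p.2
    rw [mul_assoc, mul_assoc, hcomm]
  have E2' : UpE u q.1 q.2 ∨ DnE u q.1 q.2 := E2.imp C1 C2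
  have E1' : UpE (u * Equiv.swap q.1 q.2) p.1 p.2 ∨ DnE (u * Equiv.swap q.1 q.2) p.1 p.2 :=
    E1.imp C3 C4
  refine ⟨(isQBEdge_iff u q).mpr ⟨hq, E2'⟩, (isQBEdge_iff _ p).mpr ⟨hp, E1'⟩, hstepcomm, ?_⟩
  have hsq : step n u q = u * Equiv.swap q.1 q.2 := rfl
  rcases E1 with h1 | h1 <;> rcases E2 with h2 | h2
  · rw [edgeWeight_up hp h1, hstep, edgeWeight_up hq h2, hsq, edgeWeight_up hq (C1 h2),
      edgeWeight_up hp (C3 h1)]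
  · rw [edgeWeight_up hp h1, hstep, edgeWeight_dn hq h2, hsq, edgeWeight_dn hq (C2 h2),
      edgeWeight_up hp (C3 h1)]
    rw [zero_add, add_zero]
  · rw [edgeWeight_dn hp h1, hstep, edgeWeight_up hq h2, hsq, edgeWeight_up hq (C1 h2),
      edgeWeight_dn hp (C4 h1)]
    rw [zero_add, add_zero]
  · rw [edgeWeight_dn hp h1, hstep, edgeWeight_dn hq h2, hsq, edgeWeight_dn hq (C2 h2),
      edgeWeight_dn hp (C4 h1)]
    rw [add_comm]

end QBG5


namespace QBG6
open Equiv QBG QBG5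

variable {n : ℕ}

def lexle (x y : ℕ × (Fin n × Fin n)) : Prop :=
  x.1 < y.1 ∨ (x.1 = y.1 ∧ x.2.1 ≤ y.2.1)

lemma lexle_trans : ∀ {x y z : ℕ × (Fin n × Fin n)}, lexle x y → lexle y z → lexle x z := by
  rintro x y z (h1 | ⟨h1, h1'⟩) (h2 | ⟨h2, h2'⟩)
  · exact Or.inl (h1.trans h2)
  · exact Or.inl (h2 ▸ h1)
  · exact Or.inl (h1 ▸ h2)
  · exact Or.inr ⟨h1.trans h2, h1'.trans h2'⟩

def bnds (M : List (ℕ × (Fin n × Fin n))) : Prop :=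
  ∀ m ∈ M, (m.2.1 : ℕ) ≤ m.1 ∧ m.1 < (m.2.2 : ℕ)

def kbnodup (M : List (ℕ × (Fin n × Fin n))) : Prop :=
  (M.map (fun m => (m.1, m.2.2))).Nodup

lemma insert_sorted (rest : List (ℕ × (Fin n × Fin n))) :
    ∀ (m : ℕ × (Fin n × Fin n)) (u v : Equiv.Perm (Fin n)),
    isPath n u ((m :: rest).map Prod.snd) v →
    bnds (m :: rest) → kbnodup (m :: rest) →
    List.Pairwise lexle rest →
    (∀ x ∈ rest, m.1 ≤ x.1) →
    ∃ N, N.Perm (m :: rest) ∧ List.Pairwise lexle N ∧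
      isPath n u (N.map Prod.snd) v ∧
      pathWeight n u (N.map Prod.snd) = pathWeight n u ((m :: rest).map Prod.snd) := by
  induction rest with
  | nil =>
    intro m u v hpath _ _ _ _
    exact ⟨[m], List.Perm.refl _, List.pairwise_singleton _ _, hpath, rfl⟩
  | cons m2 rest' IH =>
    intro m u v hpath hb hnd hsort hall
    obtain ⟨hm2all, hrest'⟩ := List.pairwise_cons.mp hsort
    by_cases hle : lexle m m2
    · refine ⟨m :: m2 :: rest', List.Perm.refl _, ?_, hpath, rfl⟩
      refine List.pairwise_cons.mpr ⟨?_, hsort⟩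
      intro x hx
      rcases List.mem_cons.mp hx with rfl | hx
      · exact hle
      · exact lexle_trans hle (hm2all x hx)
    · -- must swap m and m2
      have hklem : m.1 ≤ m2.1 := hall m2 (List.mem_cons_self)
      have hnlt : ¬ m.1 < m2.1 := fun h => hle (Or.inl h)
      have hk : m.1 = m2.1 := le_antisymm hklem (not_lt.mp hnlt)
      have ha' : m2.2.1 < m.2.1 := by
        by_contra hcon
        exact hle (Or.inr ⟨hk, not_lt.mp hcon⟩)
      obtain ⟨e1, e2, hrestpath⟩ :
          isQBEdge n u m.2 ∧ isQBEdge n (step n u m.2) m2.2 ∧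
            isPath n (step n (step n u m.2) m2.2) (rest'.map Prod.snd) v := hpath
      have hbm := hb m (List.mem_cons_self)
      have hbm2 := hb m2 (List.mem_cons_of_mem _ (List.mem_cons_self))
      have hbb : m.2.2 ≠ m2.2.2 := by
        intro hcon
        have hnd0 : ((m :: m2 :: rest').map (fun y => (y.1, y.2.2))).Nodup := hnd
        rw [List.map_cons, List.map_cons, List.nodup_cons] at hnd0
        apply hnd0.1
        rw [show ((m.1 : ℕ), m.2.2) = (m2.1, m2.2.2) from Prod.ext hk hcon]
        exact List.mem_cons_self
      have hp1 : m.2.1 < m2.2.2 := by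
        rw [Fin.lt_def]
        omega
      obtain ⟨f1, f2, hsc, hweq⟩ := commute_edges u m.2 m2.2 ha' hp1 hbb e1 e2
      have hpath' : isPath n (step n u m2.2) ((m :: rest').map Prod.snd) v := by
        refine ⟨f2, ?_⟩
        rw [← hsc]
        exact hrestpath
      have hb' : bnds (m :: rest') := by
        intro x hx
        rcases List.mem_cons.mp hx with rfl | hx
        · exact hbm
        · exact hb x (List.mem_cons_of_mem _ (List.mem_cons_of_mem _ hx))
      have hsub : (m :: rest').Sublist (m :: m2 :: rest') :=
        List.Sublist.cons₂ m (List.sublist_cons_self m2 rest')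
      have hnd' : kbnodup (m :: rest') := List.Nodup.sublist (hsub.map _) hnd
      have hall' : ∀ x ∈ rest', m.1 ≤ x.1 :=
        fun x hx => hall x (List.mem_cons_of_mem _ hx)
      obtain ⟨N', hperm', hsort', hpathN', hwN'⟩ :=
        IH m (step n u m2.2) v hpath' hb' hnd' hrest' hall'
      refine ⟨m2 :: N', ?_, ?_, ⟨f1, hpathN'⟩, ?_⟩
      · exact (hperm'.cons m2).trans (List.Perm.swap m m2 rest')
      · refine List.pairwise_cons.mpr ⟨?_, hsort'⟩
        intro x hx
        rcases List.mem_cons.mp (hperm'.subset hx) with rfl | hx'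
        · exact Or.inr ⟨hk.symm, le_of_lt ha'⟩
        · exact hm2all x hx'
      · show edgeWeight n u m2.2 + pathWeight n (step n u m2.2) (N'.map Prod.snd) = _
        rw [hwN']
        show edgeWeight n u m2.2 + (edgeWeight n (step n u m2.2) m.2 +
            pathWeight n (step n (step n u m2.2) m.2) (rest'.map Prod.snd)) =
          edgeWeight n u m.2 + (edgeWeight n (step n u m.2) m2.2 +
            pathWeight n (step n (step n u m.2) m2.2) (rest'.map Prod.snd))
        rw [hsc, ← add_assoc, ← add_assoc, hweq]

lemma sort_all (M : List (ℕ × (Fin n × Fin n))) :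
    ∀ (u v : Equiv.Perm (Fin n)),
    isPath n u (M.map Prod.snd) v →
    bnds M → kbnodup M →
    List.Pairwise (fun x y : ℕ × (Fin n × Fin n) => x.1 ≤ y.1) M →
    ∃ N, N.Perm M ∧ List.Pairwise lexle N ∧
      isPath n u (N.map Prod.snd) v ∧
      pathWeight n u (N.map Prod.snd) = pathWeight n u (M.map Prod.snd) := by
  induction M with
  | nil => intro u v hpath _ _ _; exact ⟨[], List.Perm.refl _, List.Pairwise.nil, hpath, rfl⟩
  | cons m M' IH =>
    intro u v hpath hb hnd hpw
    obtain ⟨hmall, hpw'⟩ := List.pairwise_cons.mp hpw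
    obtain ⟨e1, hrest⟩ : isQBEdge n u m.2 ∧ isPath n (step n u m.2) (M'.map Prod.snd) v := hpath
    have hb' : bnds M' := fun x hx => hb x (List.mem_cons_of_mem _ hx)
    have hnd' : kbnodup M' := (List.nodup_cons.mp hnd).2
    obtain ⟨N', hperm', hsort', hpath', hw'⟩ := IH (step n u m.2) v hrest hb' hnd' hpw'
    have hpath2 : isPath n u ((m :: N').map Prod.snd) v := ⟨e1, hpath'⟩
    have hb2 : bnds (m :: N') := by
      intro x hx
      rcases List.mem_cons.mp hx with hxm | hx
      · rw [hxm]; exact hb m (List.mem_cons_self)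
      · exact hb' x (hperm'.subset hx)
    have hnd2 : kbnodup (m :: N') := by
      have hpm : ((m :: N').map (fun y : ℕ × (Fin n × Fin n) => (y.1, y.2.2))).Perm
          ((m :: M').map (fun y : ℕ × (Fin n × Fin n) => (y.1, y.2.2))) := (hperm'.cons m).map _
      exact hpm.nodup_iff.mpr hnd
    have hall2 : ∀ x ∈ N', m.1 ≤ x.1 := fun x hx => hmall x (hperm'.subset hx)
    obtain ⟨N, hperm, hsort, hpathN, hwN⟩ :=
      insert_sorted N' m u v hpath2 hb2 hnd2 hsort' hall2
    refine ⟨N, hperm.trans (hperm'.cons m), hsort, hpathN, ?_⟩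
    rw [hwN]
    show edgeWeight n u m.2 + pathWeight n (step n u m.2) (N'.map Prod.snd) = _
    rw [hw']
    rfl

end QBG6


namespace QBG7

variable {β : Type*} {α : Type*}

lemma flatten_ofFn_update_cons : ∀ {m : ℕ} (g : Fin m → List β) (t : Fin m) (x : β),
    (∀ j : Fin m, j < t → g j = []) →
    (List.ofFn (Function.update g t (x :: g t))).flatten = x :: (List.ofFn g).flatten := by
  intro m
  induction m with
  | zero => intro g t; exact t.elim0
  | succ m ih =>
    intro g t x h
    rcases Fin.eq_zero_or_eq_succ t with rfl | ⟨t', rfl⟩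
    · have h1 : Function.update g 0 (x :: g 0) 0 = x :: g 0 := Function.update_self 0 _ g
      have h2 : ∀ i : Fin m, Function.update g 0 (x :: g 0) i.succ = g i.succ :=
        fun i => Function.update_of_ne (Fin.succ_ne_zero i) _ _
      rw [List.ofFn_succ, List.ofFn_succ, h1]
      simp only [h2]
      rfl
    · have e0 : Function.update g t'.succ (x :: g t'.succ) 0 = g 0 :=
        Function.update_of_ne (Fin.succ_ne_zero t').symm _ _
      have g0nil : g 0 = [] := h 0 (Fin.succ_pos t')
      have ecomp : (fun i : Fin m => Function.update g t'.succ (x :: g t'.succ) i.succ)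
          = Function.update (fun i : Fin m => g i.succ) t' (x :: g t'.succ) := by
        funext i
        rcases eq_or_ne i t' with rfl | hne
        · rw [Function.update_self, Function.update_self]
        · rw [Function.update_of_ne hne]
          exact Function.update_of_ne (fun hc => hne (Fin.succ_injective _ hc)) _ _
      rw [List.ofFn_succ, List.ofFn_succ, e0, ecomp, List.flatten_cons, List.flatten_cons,
        ih (fun i : Fin m => g i.succ) t' x
          (fun j hj => h j.succ (by rwa [Fin.succ_lt_succ_iff])), g0nil]
      rfl

lemma decomp (m : ℕ) (N : List (ℕ × α)) (hpw : List.Pairwise (fun x y => x.1 ≤ y.1) N)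
    (hbd : ∀ x ∈ N, x.1 < m) :
    ∃ g : Fin m → List (ℕ × α), N = (List.ofFn g).flatten ∧
      ∀ j, ∀ x ∈ g j, x.1 = (j : ℕ) := by
  induction N with
  | nil =>
    refine ⟨fun _ => [], ?_, fun j x hx => absurd hx (List.not_mem_nil)⟩
    rw [eq_comm, List.flatten_eq_nil_iff]
    intro l hl
    obtain ⟨i, rfl⟩ := List.mem_ofFn.mp hl
    rfl
  | cons x N' ihN =>
    obtain ⟨hxall, hpw'⟩ := List.pairwise_cons.mp hpw
    obtain ⟨g', hflat, hkey⟩ := ihN hpw' (fun y hy => hbd y (List.mem_cons_of_mem _ hy))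
    have hxm : x.1 < m := hbd x (List.mem_cons_self)
    have hempty : ∀ j : Fin m, j < (⟨x.1, hxm⟩ : Fin m) → g' j = [] := by
      intro j hj
      rw [List.eq_nil_iff_forall_not_mem]
      intro y hy
      have h1 : y.1 = (j : ℕ) := hkey j y hy
      have h2 : y ∈ N' := by
        rw [hflat]
        exact List.mem_flatten.mpr ⟨g' j, List.mem_ofFn.mpr ⟨j, rfl⟩, hy⟩
      have h3 := hxall y h2
      have hj' : (j : ℕ) < x.1 := hj
      omega
    refine ⟨Function.update g' ⟨x.1, hxm⟩ (x :: g' ⟨x.1, hxm⟩), ?_, ?_⟩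
    · rw [flatten_ofFn_update_cons g' _ x hempty, ← hflat]
    · intro j y hy
      rcases eq_or_ne j ⟨x.1, hxm⟩ with rfl | hne
      · rw [Function.update_self] at hy
        rcases List.mem_cons.mp hy with hyx | hy
        · rw [hyx]
        · exact hkey _ y hy
      · rw [Function.update_of_ne hne] at hy
        exact hkey j y hy

end QBG7


/-- If there is an admissible directed path in `Γ_n` from `u` to `v` of weight `d`,
then there are `β` with `β_k ≤ n - k` for all `k` and a `y^β`-admissible directed
path in `Γ_n` from `u` to `v` of the same weight `d`.
(`k : Fin (n-1)` is `0`-based: paper's `k` is `(k : ℕ) + 1`, so paper's `n - k`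
is `n - 1 - (k : ℕ)`.) -/
theorem admissible_reduces_to_yBeta_admissible (n : ℕ) (hn : 2 ≤ n)
    (u v : Equiv.Perm (Fin n)) (L : List (Fin n × Fin n)) (d : Fin (n - 1) → ℤ)
    (hpath : isPath n u L v) (hadm : Adm n L) (hw : pathWeight n u L = d) :
    ∃ (β : Fin (n - 1) → ℕ) (L' : List (Fin n × Fin n)),
      (∀ k : Fin (n - 1), β k ≤ n - 1 - (k : ℕ)) ∧
      isPath n u L' v ∧ yBetaAdm n β L' ∧ pathWeight n u L' = d := by
  classical
  obtain ⟨ks, hlen, hchain, hbounds, hnodup⟩ := hadm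
  have hmapsnd : (ks.zip L).map Prod.snd = L := List.map_snd_zip hlen.ge
  have hmapfst : (ks.zip L).map Prod.fst = ks := List.map_fst_zip hlen.le
  have hb : QBG6.bnds (ks.zip L) := hbounds
  have hkb : (ks.zip L).map (fun y => (y.1, y.2.2)) = ks.zip (L.map Prod.snd) := by
    rw [List.zip_map_right]
    rfl
  have hnd : QBG6.kbnodup (ks.zip L) := by
    unfold QBG6.kbnodup
    rw [hkb]
    exact hnodup
  have hpwM : List.Pairwise (fun x y : ℕ × (Fin n × Fin n) => x.1 ≤ y.1) (ks.zip L) := by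
    have h1 : List.Pairwise (· ≤ ·) ks := List.isChain_iff_pairwise.mp hchain
    rw [← hmapfst] at h1
    exact List.pairwise_map.mp h1
  have hpathM : isPath n u ((ks.zip L).map Prod.snd) v := by rw [hmapsnd]; exact hpath
  obtain ⟨N, hperm, hsort, hpathN, hwN⟩ := QBG6.sort_all (ks.zip L) u v hpathM hb hnd hpwM
  have hbN : QBG6.bnds N := fun x hx => hb x (hperm.subset hx)
  have hndN : QBG6.kbnodup N := ((hperm.map _).nodup_iff).mpr hnd
  have hpwN : List.Pairwise (fun x y : ℕ × (Fin n × Fin n) => x.1 ≤ y.1) N :=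
    hsort.imp (fun h => h.elim le_of_lt (fun h' => le_of_eq h'.1))
  have hkeylt : ∀ x ∈ N, x.1 < n - 1 := by
    intro x hx
    have h1 := hbN x hx
    have h2 : (x.2.2 : ℕ) < n := x.2.2.isLt
    omega
  obtain ⟨g, hflat, hkey⟩ := QBG7.decomp (n - 1) N hpwN hkeylt
  have hsubl : ∀ j : Fin (n - 1), (g j).Sublist N := by
    intro j
    rw [hflat]
    exact List.sublist_flatten_of_mem (List.mem_ofFn.mpr ⟨j, rfl⟩)
  have hmemN : ∀ j : Fin (n - 1), ∀ y ∈ g j, y ∈ N := fun j y hy => (hsubl j).subset hy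
  have hnodup2 : ∀ j : Fin (n - 1), ((g j).map (fun y => y.2.2)).Nodup := by
    intro j
    have h1 : ((g j).map (fun y => (y.1, y.2.2))).Nodup := hndN.sublist ((hsubl j).map _)
    have h2 : (g j).map (fun y => y.2.2)
        = ((g j).map (fun y => (y.1, y.2.2))).map Prod.snd := by
      rw [List.map_map]
      rfl
    rw [h2]
    refine List.Nodup.map_on ?_ h1
    intro p hp q hq hpq
    obtain ⟨yp, hyp, rfl⟩ := List.mem_map.mp hp
    obtain ⟨yq, hyq, rfl⟩ := List.mem_map.mp hq
    have e1 : yp.1 = (j : ℕ) := hkey j yp hyp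
    have e2 : yq.1 = (j : ℕ) := hkey j yq hyq
    simp only at hpq
    exact Prod.ext (by rw [e1, e2]) hpq
  refine ⟨fun j => (g j).length, N.map Prod.snd, ?_, hpathN, ?_, ?_⟩
  · intro k
    have hnd2 := hnodup2 k
    have hcard : ((g k).map (fun y => y.2.2)).toFinset.card = (g k).length := by
      rw [List.toFinset_card_of_nodup hnd2, List.length_map]
    have hkn : (k : ℕ) < n := lt_of_lt_of_le k.isLt (Nat.sub_le n 1)
    have hsubF : ((g k).map (fun y => y.2.2)).toFinset
        ⊆ Finset.Ioi (⟨(k : ℕ), hkn⟩ : Fin n) := by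
      intro b hbm
      rw [List.mem_toFinset] at hbm
      obtain ⟨y, hy, rfl⟩ := List.mem_map.mp hbm
      rw [Finset.mem_Ioi]
      have h1 := (hbN y (hmemN k y hy)).2
      have h2 : y.1 = (k : ℕ) := hkey k y hy
      rw [Fin.lt_def]
      show (k : ℕ) < (y.2.2 : ℕ)
      omega
    have hle := Finset.card_le_card hsubF
    rw [hcard, Fin.card_Ioi] at hle
    simpa using hle
  · refine ⟨fun j => (g j).map Prod.snd, ?_, ?_⟩
    · rw [hflat, List.map_flatten, List.map_ofFn]
      rfl
    · intro k
      refine ⟨List.length_map _, ?_, ?_, ?_⟩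
      · -- Chain' on first components
        have hpair : List.Pairwise QBG6.lexle (g k) := hsort.sublist (hsubl k)
        have hpair2 : List.Pairwise (fun a b : ℕ × (Fin n × Fin n) => a.2.1 ≤ b.2.1) (g k) := by
          refine List.Pairwise.imp_of_mem ?_ hpair
          intro a b ha hb hab
          have e1 : a.1 = (k : ℕ) := hkey k a ha
          have e2 : b.1 = (k : ℕ) := hkey k b hb
          rcases hab with h | h
          · omega
          · exact h.2
        have : List.Pairwise (· ≤ ·) (((g k).map Prod.snd).map Prod.fst) := by
          rw [List.map_map]
          exact List.pairwise_map.mpr hpair2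
        exact this.isChain
      · intro p hp
        obtain ⟨y, hy, rfl⟩ := List.mem_map.mp hp
        have h1 := hbN y (hmemN k y hy)
        have h2 : y.1 = (k : ℕ) := hkey k y hy
        constructor <;> omega
      · have : ((g k).map Prod.snd).map Prod.snd = (g k).map (fun y => y.2.2) := by
          rw [List.map_map]
          rfl
        rw [this]
        exact hnodup2 k
  · rw [hwN, hmapsnd, hw]
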